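/- The Conway graph invariant satisfies the 2-term relation: for any graph G and any ordered pair of distinct vertices A, B, ν(G) = ν(G̃_{AB}). -/

import Mathlib

open Classical in
noncomputable def adjM {V : Type} [Fintype V] [DecidableEq V] (G : SimpleGraph V) :
    Matrix V V (ZMod 2) :=
  fun i j => if G.Adj i j then 1 else 0

open Classical in
noncomputable def conway {V : Type} [Fintype V] [DecidableEq V] (G : SimpleGraph V) :
    Polynomial ℂ :=
  if (adjM G).det ≠ 0 then (-(Polynomial.X : Polynomial ℂ)) ^ (Fintype.card V / 2) else 0

/- `tilde G A B` toggles the adjacency to `A` of every vertex `v ∉ {A,B}` adjacent to `B`. -/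
def tilde {V : Type} (G : SimpleGraph V) (A B : V) : SimpleGraph V where
  Adj x y := Xor' (G.Adj x y)
    ((x = A ∧ y ≠ A ∧ y ≠ B ∧ G.Adj y B) ∨ (y = A ∧ x ≠ A ∧ x ≠ B ∧ G.Adj x B))
  symm := by
    refine ⟨fun x y h => ?_⟩
    have hxy : G.Adj x y ↔ G.Adj y x := ⟨fun h => h.symm, fun h => h.symm⟩
    unfold Xor' Xor at h ⊢
    tauto
  loopless := by
    refine ⟨fun x h => ?_⟩
    have : ¬ G.Adj x x := G.loopless.irrefl x
    unfold Xor' Xor at h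
    tauto


open Matrix in
lemma adjM_tilde_eq {V : Type} [Fintype V] [DecidableEq V]
    (G : SimpleGraph V) (A B : V) (hAB : A ≠ B) :
    adjM (tilde G A B) =
      Matrix.transvection A B (1:ZMod 2) * adjM G * (Matrix.transvection A B 1)ᵀ := by
  classical
  have hE : (Matrix.single A B (1:ZMod 2))ᵀ = Matrix.single B A 1 := by
    ext a b
    simp [Matrix.single, Matrix.transpose_apply, and_comm]
  ext x y
  rw [Matrix.transvection]
  simp only [Matrix.transpose_add, Matrix.transpose_one, hE, Matrix.add_mul, Matrix.mul_add,
    Matrix.one_mul, Matrix.mul_one, Matrix.add_apply]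
  by_cases hx : x = A <;> by_cases hy : y = A
  · subst hx
    simp [adjM, tilde, hAB, hy, G.adj_comm]
    by_cases h : G.Adj B x <;> simp [h] <;> decide
  · subst hx
    by_cases hyB : y = B
    · subst hyB
      simp [adjM, tilde, hAB, hAB.symm, Xor', Xor]
    · simp only [adjM, tilde, Xor']
      simp [hAB, hy, hyB, Ne.symm hy]
      by_cases h1 : G.Adj x y <;> by_cases h2 : G.Adj B y <;>
        simp [adjM, h1, h2, G.adj_comm y B] <;> decide
  · subst hy
    by_cases hxB : x = B
    · subst hxB
      simp [adjM, tilde, hAB, hAB.symm, Xor', Xor]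
    · simp only [adjM, tilde, Xor']
      simp [hAB, hx, hxB, Ne.symm hx]
      by_cases h1 : G.Adj x y <;> by_cases h2 : G.Adj x B <;>
        simp [adjM, h1, h2, G.adj_comm x B] <;> decide
  · simp [adjM, tilde, hx, hy, Xor', Xor, Ne.symm hx, Ne.symm hy]

lemma det_adjM_tilde {V : Type} [Fintype V] [DecidableEq V]
    (G : SimpleGraph V) (A B : V) (hAB : A ≠ B) :
    (adjM (tilde G A B)).det = (adjM G).det := by
  rw [adjM_tilde_eq G A B hAB, Matrix.det_mul, Matrix.det_mul, Matrix.det_transpose,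
    Matrix.det_transvection_of_ne A B hAB]
  ring

/-- The Conway graph invariant satisfies the 2-term relation:
for any graph `G` and any ordered pair of distinct vertices `A, B`,
`ν(G) = ν(G̃_{AB})`. -/
theorem conway_two_term {V : Type} [Fintype V] [DecidableEq V]
    (G : SimpleGraph V) (A B : V) (hAB : A ≠ B) :
    conway G = conway (tilde G A B) := by
  unfold conway
  rw [det_adjM_tilde G A B hAB]
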